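/- arXiv:0902.4190 — 3 statements merged into one kernel-verified Lean document; each statement's English description precedes it below -/
import Mathlib

section
/- Let p be an odd prime and n an integer not divisible by p. Then |𝔰(p,n) − (−n/p) · p²/(p−1)³| ≤ 7p/(p−1)³, where (−n/p) denotes the Legendre symbol of −n modulo p. -/
/-- `e_q(x) = exp(2πix/q)` evaluated at the integer `x = a·h²`, summed over a reduced
residue system: `S_q(a) = ∑_{1 ≤ h ≤ q, gcd(h,q)=1} e_q(a h²)`. -/
noncomputable def Sq (q : ℕ) (a : ℤ) : ℂ :=
  ∑ h ∈ (Finset.Icc 1 q).filter (fun h => Nat.gcd h q = 1),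
    Complex.exp (2 * (Real.pi : ℂ) * Complex.I * ((a : ℂ) * (h : ℂ) ^ 2) / (q : ℂ))

/-- The singular series coefficient
`𝔰(q,n) = φ(q)⁻³ ∑_{1 ≤ a ≤ q, gcd(a,q)=1} S_q(a)³ e_q(−an)`. -/
noncomputable def sfrak (q : ℕ) (n : ℤ) : ℂ :=
  ((q.totient : ℂ)) ⁻¹ ^ 3 *
    ∑ a ∈ (Finset.Icc 1 q).filter (fun a => Nat.gcd a q = 1),
      (Sq q a) ^ 3 *
        Complex.exp (-(2 * (Real.pi : ℂ) * Complex.I * ((a : ℂ) * (n : ℂ)) / (q : ℂ)))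

private lemma cast_ne_zero_of_gcd {p a : ℕ} (hp : p.Prime) (hga : Nat.gcd a p = 1) :
    ((a : ℕ) : ZMod p) ≠ 0 := by
  haveI : NeZero p := ⟨hp.ne_zero⟩
  intro h0
  rw [ZMod.natCast_eq_zero_iff] at h0
  have h1 : p ∣ 1 := hga ▸ Nat.dvd_gcd h0 dvd_rfl
  exact hp.one_lt.ne' (Nat.dvd_one.mp h1)

private lemma sum_reindex_prime {p : ℕ} [NeZero p] (hp : p.Prime) (f : ZMod p → ℂ) :
    ∑ h ∈ (Finset.Icc 1 p).filter (fun h => Nat.gcd h p = 1), f ((h : ℕ) : ZMod p)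
      = ∑ x ∈ Finset.univ.filter (fun x : ZMod p => x ≠ 0), f x := by
  refine Finset.sum_nbij' (fun h => ((h : ℕ) : ZMod p)) (fun x => x.val) ?_ ?_ ?_ ?_ ?_
  · intro a ha
    simp only [Finset.mem_filter, Finset.mem_Icc] at ha
    simp only [Finset.mem_filter, Finset.mem_univ, true_and]
    exact cast_ne_zero_of_gcd hp ha.2
  · intro x hx
    simp only [Finset.mem_filter, Finset.mem_univ, true_and] at hx
    have hvne : x.val ≠ 0 := fun h => hx (by rwa [ZMod.val_eq_zero] at h)
    have hvlt : x.val < p := ZMod.val_lt x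
    have hnd : ¬ p ∣ x.val := fun h => hvne (Nat.eq_zero_of_dvd_of_lt h hvlt)
    simp only [Finset.mem_filter, Finset.mem_Icc]
    exact ⟨⟨Nat.one_le_iff_ne_zero.mpr hvne, hvlt.le⟩,
      Nat.Coprime.gcd_eq_one (Nat.coprime_comm.mp ((hp.coprime_iff_not_dvd).mpr hnd))⟩
  · intro a ha
    simp only [Finset.mem_filter, Finset.mem_Icc] at ha
    have hlt : a < p := by
      rcases lt_or_eq_of_le ha.1.2 with h | h
      · exact h
      · exfalso; rw [h] at ha; rw [Nat.gcd_self] at ha; exact hp.one_lt.ne' ha.2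
    exact ZMod.val_cast_of_lt hlt
  · intro x _; exact ZMod.natCast_rightInverse x
  · intro a _; rfl

section GaussAux

variable {p : ℕ} [Fact p.Prime] [NeZero p]

private noncomputable def qc (p : ℕ) [Fact p.Prime] : MulChar (ZMod p) ℂ :=
  (quadraticChar (ZMod p)).ringHomComp (Int.castRingHom ℂ)

private lemma qc_mul_self {b : ZMod p} (hb : b ≠ 0) : qc p b * qc p b = 1 := by
  have : quadraticChar (ZMod p) b * quadraticChar (ZMod p) b = 1 := by
    rw [← pow_two]; exact quadraticChar_sq_one hb
  simp only [qc, MulChar.ringHomComp_apply, eq_intCast, ← Int.cast_mul, this, Int.cast_one]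

private lemma qc_dichotomy {b : ZMod p} (hb : b ≠ 0) : qc p b = 1 ∨ qc p b = -1 := by
  rcases quadraticChar_dichotomy hb with h | h <;>
    simp [qc, MulChar.ringHomComp_apply, h]

/-- `∑ x, χ x ψ(b x) = χ b · g` for `b ≠ 0`. -/
private lemma sum_qc_mulShift {b : ZMod p} (hb : b ≠ 0) :
    ∑ x : ZMod p, qc p x * ZMod.stdAddChar (b * x)
      = qc p b * gaussSum (qc p) ZMod.stdAddChar := by
  have hsum : ∑ x : ZMod p, qc p x * ZMod.stdAddChar (b * x)
      = gaussSum (qc p) (AddChar.mulShift ZMod.stdAddChar b) := by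
    unfold gaussSum
    exact Finset.sum_congr rfl fun x _ => by rw [AddChar.mulShift_apply]
  have hu : qc p b * gaussSum (qc p) (AddChar.mulShift ZMod.stdAddChar b)
      = gaussSum (qc p) ZMod.stdAddChar := by
    have := gaussSum_mulShift (qc p) ZMod.stdAddChar (Units.mk0 b hb)
    simpa using this
  rw [hsum, ← hu, ← mul_assoc, qc_mul_self hb, one_mul]

private lemma sum_psi_mul {b : ZMod p} (hb : b ≠ 0) :
    ∑ x : ZMod p, ZMod.stdAddChar (b * x) = 0 := by
  have := AddChar.sum_mulShift (ψ := (ZMod.stdAddChar : AddChar (ZMod p) ℂ)) b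
    (ZMod.isPrimitive_stdAddChar p)
  rw [if_neg hb] at this
  rw [show (0 : ℂ) = ((0 : ℕ) : ℂ) by norm_num, ← this]
  exact Finset.sum_congr rfl fun x _ => by rw [mul_comm]

private lemma quad_sum_eq (hp2 : p ≠ 2) {b : ZMod p} (hb : b ≠ 0) :
    ∑ x : ZMod p, ZMod.stdAddChar (b * x ^ 2)
      = qc p b * gaussSum (qc p) ZMod.stdAddChar := by
  have hF : ringChar (ZMod p) ≠ 2 := by rw [ZMod.ringChar_zmod_n]; exact hp2
  have h1 : ∀ y : ZMod p,
      ∑ x ∈ Finset.univ.filter (fun x : ZMod p => x ^ 2 = y), ZMod.stdAddChar (b * x ^ 2)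
        = (((quadraticChar (ZMod p) y : ℤ) : ℂ) + 1) * ZMod.stdAddChar (b * y) := by
    intro y
    rw [Finset.sum_congr rfl (fun x hx => by rw [(Finset.mem_filter.mp hx).2]),
        Finset.sum_const, nsmul_eq_mul]
    congr 1
    have h2 := quadraticChar_card_sqrts hF y
    rw [show ({x : ZMod p | x ^ 2 = y}.toFinset)
        = Finset.univ.filter (fun x : ZMod p => x ^ 2 = y) by
      ext x; simp] at h2
    have h3 := congrArg (Int.cast : ℤ → ℂ) h2
    push_cast at h3 ⊢
    exact_mod_cast h3
  calc ∑ x : ZMod p, ZMod.stdAddChar (b * x ^ 2)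
      = ∑ y : ZMod p, ∑ x ∈ Finset.univ.filter (fun x : ZMod p => x ^ 2 = y),
          ZMod.stdAddChar (b * x ^ 2) :=
        (Finset.sum_fiberwise Finset.univ (fun x : ZMod p => x ^ 2)
          (fun x => ZMod.stdAddChar (b * x ^ 2))).symm
    _ = ∑ y : ZMod p, (((quadraticChar (ZMod p) y : ℤ) : ℂ) + 1) * ZMod.stdAddChar (b * y) :=
        Finset.sum_congr rfl fun y _ => h1 y
    _ = ∑ y : ZMod p, qc p y * ZMod.stdAddChar (b * y)
          + ∑ y : ZMod p, ZMod.stdAddChar (b * y) := by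
        rw [← Finset.sum_add_distrib]
        exact Finset.sum_congr rfl fun y _ => by
          simp only [qc, MulChar.ringHomComp_apply, eq_intCast]; ring
    _ = qc p b * gaussSum (qc p) ZMod.stdAddChar := by
        rw [sum_qc_mulShift hb, sum_psi_mul hb, add_zero]

private lemma qc_gaussSum_sq (hp2 : p ≠ 2) :
    gaussSum (qc p) ZMod.stdAddChar ^ 2 = qc p (-1) * p := by
  have hF : ringChar (ZMod p) ≠ 2 := by rw [ZMod.ringChar_zmod_n]; exact hp2
  have h1 : (qc p) ≠ 1 :=
    (MulChar.ringHomComp_ne_one_iff (RingHom.injective_int _)).mpr (quadraticChar_ne_one hF)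
  have h2 : (qc p).IsQuadratic := (quadraticChar_isQuadratic (ZMod p)).comp _
  have := gaussSum_sq h1 h2 (ZMod.isPrimitive_stdAddChar p)
  rwa [ZMod.card p] at this

private lemma Sq_eq (hp2 : p ≠ 2) {a : ℤ} (ha : ((a : ℤ) : ZMod p) ≠ 0) :
    Sq p a = qc p ((a : ℤ) : ZMod p) * gaussSum (qc p) ZMod.stdAddChar - 1 := by
  have hp : p.Prime := Fact.out
  have step1 : Sq p a = ∑ h ∈ (Finset.Icc 1 p).filter (fun h => Nat.gcd h p = 1),
      (fun x : ZMod p => ZMod.stdAddChar (((a : ℤ) : ZMod p) * x ^ 2)) ((h : ℕ) : ZMod p) := by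
    unfold Sq
    refine Finset.sum_congr rfl fun h _ => ?_
    simp only
    rw [show (((a : ℤ) : ZMod p) * ((h : ℕ) : ZMod p) ^ 2) = (((a * (h:ℕ)^2 : ℤ)) : ZMod p) by
          push_cast; ring,
        ZMod.stdAddChar_coe]
    congr 1
    push_cast
    ring
  rw [step1,
    sum_reindex_prime hp (fun x : ZMod p => ZMod.stdAddChar (((a : ℤ) : ZMod p) * x ^ 2)),
    Finset.filter_ne',
    Finset.sum_erase_eq_sub (Finset.mem_univ (0 : ZMod p)), quad_sum_eq hp2 ha]
  norm_num

end GaussAux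

/-- For an odd prime p and an integer n not divisible by p,
`|𝔰(p,n) − (−n/p)·p²/(p−1)³| ≤ 7p/(p−1)³`, where `(−n/p)` is the Legendre symbol
(given here by the Jacobi symbol, which coincides with it for prime modulus). -/
theorem sfrak_prime_main_term (p : ℕ) (hp : p.Prime) (hodd : Odd p) (n : ℤ)
    (hn : ¬ (p : ℤ) ∣ n) :
    ‖sfrak p n -
        (jacobiSym (-n) p : ℂ) * (p : ℂ) ^ 2 / ((p : ℂ) - 1) ^ 3‖
      ≤ 7 * (p : ℝ) / ((p : ℝ) - 1) ^ 3 := by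
  haveI : Fact p.Prime := ⟨hp⟩
  haveI : NeZero p := ⟨hp.ne_zero⟩
  have hp2 : p ≠ 2 := by rintro rfl; exact (Nat.not_odd_iff_even.mpr even_two) hodd
  have hp3 : 3 ≤ p := Nat.lt_of_le_of_ne hp.two_le (Ne.symm hp2)
  set g : ℂ := gaussSum (qc p) ZMod.stdAddChar with hgdef
  set nb : ZMod p := ((n : ℤ) : ZMod p) with hnbdef
  have hnb : nb ≠ 0 := by rw [hnbdef, Ne, ZMod.intCast_zmod_eq_zero_iff_dvd]; exact hn
  have hnegnb : -nb ≠ 0 := neg_ne_zero.mpr hnb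
  set A : ℂ := qc p (-nb) with hAdef
  set B : ℂ := qc p (-1) with hBdef
  have hAA : A * A = 1 := qc_mul_self hnegnb
  have hBB : B * B = 1 := qc_mul_self (neg_ne_zero.mpr one_ne_zero)
  have hg2 : g ^ 2 = B * p := qc_gaussSum_sq hp2
  have hsum : ∑ a ∈ (Finset.Icc 1 p).filter (fun a => Nat.gcd a p = 1),
      (Sq p a) ^ 3 *
        Complex.exp (-(2 * (Real.pi : ℂ) * Complex.I * ((a : ℂ) * (n : ℂ)) / (p : ℂ)))
      = ∑ x ∈ Finset.univ.filter (fun x : ZMod p => x ≠ 0),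
          (qc p x * g - 1) ^ 3 * ZMod.stdAddChar ((-nb) * x) := by
    rw [← sum_reindex_prime hp
      (fun x : ZMod p => (qc p x * g - 1) ^ 3 * ZMod.stdAddChar ((-nb) * x))]
    refine Finset.sum_congr rfl fun a ha => ?_
    have hga := (Finset.mem_filter.mp ha).2
    have haz : (((a : ℕ) : ℤ) : ZMod p) ≠ 0 := by
      push_cast
      exact cast_ne_zero_of_gcd hp hga
    congr 1
    · rw [Sq_eq hp2 haz]
      push_cast
      ring
    · rw [show ((-nb) * ((a : ℕ) : ZMod p)) = (((-((a : ℕ) * n) : ℤ)) : ZMod p) by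
            rw [hnbdef]; push_cast; ring,
          ZMod.stdAddChar_coe]
      congr 1
      push_cast
      ring
  have key : ∑ x ∈ Finset.univ.filter (fun x : ZMod p => x ≠ 0),
      (qc p x * g - 1) ^ 3 * ZMod.stdAddChar ((-nb) * x)
      = A * (p:ℂ)^2 + 3*A*B*(p:ℂ) + 3*B*(p:ℂ) + 1 := by
    have hpt : ∀ x ∈ Finset.univ.filter (fun x : ZMod p => x ≠ 0),
        (qc p x * g - 1) ^ 3 * ZMod.stdAddChar ((-nb) * x)
        = (g^3 + 3*g) * (qc p x * ZMod.stdAddChar ((-nb)*x))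
            - (3*g^2+1) * ZMod.stdAddChar ((-nb)*x) := by
      intro x hx
      have hx0 : x ≠ 0 := by
        have := (Finset.mem_filter.mp hx).2
        simpa using this
      have hc : qc p x * qc p x = 1 := qc_mul_self hx0
      linear_combination (qc p x * g^3 - 3*g^2) * ZMod.stdAddChar ((-nb)*x) * hc
    rw [Finset.sum_congr rfl hpt, Finset.sum_sub_distrib, ← Finset.mul_sum, ← Finset.mul_sum]
    have hS1 : ∑ x ∈ Finset.univ.filter (fun x : ZMod p => x ≠ 0),
        qc p x * ZMod.stdAddChar ((-nb)*x) = A * g := by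
      rw [Finset.filter_ne', Finset.sum_erase_eq_sub (Finset.mem_univ (0 : ZMod p)),
        sum_qc_mulShift hnegnb]
      simp only [mul_zero, AddChar.map_zero_eq_one, mul_one, MulChar.map_zero, sub_zero, hAdef, hgdef]
    have hS2 : ∑ x ∈ Finset.univ.filter (fun x : ZMod p => x ≠ 0),
        ZMod.stdAddChar ((-nb)*x) = -1 := by
      rw [Finset.filter_ne', Finset.sum_erase_eq_sub (Finset.mem_univ (0 : ZMod p)),
        sum_psi_mul hnegnb]
      simp
    rw [hS1, hS2]
    have hg4 : g^4 = (p:ℂ)^2 := by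
      have h4 : g^4 = (g^2)^2 := by ring
      rw [h4, hg2]
      linear_combination (p:ℂ)^2 * hBB
    linear_combination A * hg4 + (3*A + 3) * hg2
  have htot : ((p.totient : ℕ) : ℂ) = (p:ℂ) - 1 := by
    rw [Nat.totient_prime hp, Nat.cast_sub hp.one_lt.le]
    norm_num
  have hpm1 : ((p:ℂ) - 1) ≠ 0 := by
    intro h
    rw [sub_eq_zero] at h
    have : p = 1 := by exact_mod_cast h
    exact hp.one_lt.ne' this
  have hA : A = (jacobiSym (-n) p : ℂ) := by
    have h1 : ((-n : ℤ) : ZMod p) = -nb := by rw [hnbdef]; push_cast; ring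
    have h2 : legendreSym p (-n) = quadraticChar (ZMod p) ((-n : ℤ) : ZMod p) := rfl
    rw [hAdef, ← h1, ← jacobiSym.legendreSym.to_jacobiSym]
    simp [qc, MulChar.ringHomComp_apply, h2]
  have hdiff : sfrak p n - (jacobiSym (-n) p : ℂ) * (p : ℂ) ^ 2 / ((p : ℂ) - 1) ^ 3
      = (3*A*B*(p:ℂ) + 3*B*(p:ℂ) + 1) / ((p:ℂ)-1)^3 := by
    unfold sfrak
    rw [hsum, key, htot, ← hA]
    field_simp
    ring
  rw [hdiff, norm_div, norm_pow]
  have habs_den : ‖((p:ℂ)-1)‖ = (p:ℝ)-1 := by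
    rw [show ((p:ℂ)-1) = (((p:ℝ)-1 : ℝ) : ℂ) by push_cast; ring, Complex.norm_real, Real.norm_eq_abs,
      abs_of_pos]
    have : (3:ℝ) ≤ (p:ℝ) := by exact_mod_cast hp3
    linarith
  have hAabs : ‖A‖ = 1 := by
    rcases qc_dichotomy hnegnb with h | h <;> rw [hAdef, h] <;> simp
  have hBabs : ‖B‖ = 1 := by
    rcases qc_dichotomy (neg_ne_zero.mpr (one_ne_zero : (1 : ZMod p) ≠ 0)) with h | h <;>
      rw [hBdef, h] <;> simp
  have hpR1 : (1:ℝ) ≤ (p:ℝ) := by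
    have : (3:ℝ) ≤ (p:ℝ) := by exact_mod_cast hp3
    linarith
  have hnum : ‖(3*A*B*(p:ℂ) + 3*B*(p:ℂ) + 1)‖ ≤ 7*(p:ℝ) := by
    calc ‖(3*A*B*(p:ℂ) + 3*B*(p:ℂ) + 1)‖
        ≤ ‖(3*A*B*(p:ℂ) + 3*B*(p:ℂ))‖ + ‖(1:ℂ)‖ := norm_add_le _ _
      _ ≤ ‖(3*A*B*(p:ℂ))‖ + ‖(3*B*(p:ℂ))‖ + ‖(1:ℂ)‖ := by
          have := norm_add_le (3*A*B*(p:ℂ)) (3*B*(p:ℂ))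
          linarith
      _ = 3*(p:ℝ) + 3*(p:ℝ) + 1 := by
          simp [norm_mul, hAabs, hBabs, Complex.norm_natCast]
      _ ≤ 7*(p:ℝ) := by linarith
  rw [habs_den]
  have hden_pos : (0:ℝ) < ((p:ℝ)-1)^3 := by
    have h3 : (3:ℝ) ≤ (p:ℝ) := by exact_mod_cast hp3
    have h4 : (0:ℝ) < (p:ℝ) - 1 := by linarith
    positivity
  exact (div_le_div_iff_of_pos_right hden_pos).mpr hnum
end

section
/- Let α, β be real numbers with 0 < α < β, let ε > 0, let n and g be positive integers, let Q ≥ 1 be real, and let (A_q) be nonnegative real numbers indexed by the integers q with Q < q ≤ 2Q. Suppose there are B₁, B₂ ≥ 0 such that for every positive integer d, Σ_{Q < q ≤ 2Q, d | q} A_q ≤ B₁ + B₂/d. Then Σ_{Q < q ≤ 2Q} gcd(n, lcm(q,g))^α · lcm(q,g)^{−β} · A_q ≤ C · gcd(n,g)^α · g^{−β+ε} · (B₁ + Q^{−β'} B₂), where β' = min(β − α, 1) and the constant C depends only on α, β and ε. -/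
open scoped Classical

lemma tau_le (ε : ℝ) (hε : 0 < ε) :
    ∃ C : ℝ, 0 < C ∧ ∀ g : ℕ, 0 < g → ((g.divisors.card : ℝ)) ≤ C * (g : ℝ) ^ ε := by
  set M : ℝ := 1 + 1 / (ε * Real.log 2) with hM
  have hlog2 : (0:ℝ) < Real.log 2 := Real.log_pos (by norm_num)
  have hεl : 0 < ε * Real.log 2 := by positivity
  have hM1 : 1 ≤ M := by
    have : 0 < 1 / (ε * Real.log 2) := by positivity
    simp only [hM]; linarith
  set P : ℕ := ⌈(2:ℝ) ^ (1/ε)⌉₊ + 1 with hP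
  refine ⟨M ^ P, by positivity, ?_⟩
  intro g hg
  have hg0 : g ≠ 0 := hg.ne'
  -- key prime power bound
  have key : ∀ p ∈ g.primeFactors,
      ((g.factorization p + 1 : ℕ) : ℝ) ≤
        (if (p:ℝ) < (2:ℝ) ^ (1/ε) then M else 1) * ((p:ℝ) ^ (g.factorization p : ℕ)) ^ ε := by
    intro p hp
    have hpp : p.Prime := Nat.prime_of_mem_primeFactors hp
    have hp2 : (2:ℝ) ≤ (p:ℝ) := by exact_mod_cast hpp.two_le
    set k : ℕ := g.factorization p with hk
    have hbase : ((p:ℝ) ^ k) ^ ε = ((p:ℝ) ^ ε) ^ k := by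
      rw [← Real.rpow_natCast (p:ℝ) k, ← Real.rpow_mul (by linarith), mul_comm,
        Real.rpow_mul (by linarith), Real.rpow_natCast]
    by_cases hsmall : (p:ℝ) < (2:ℝ) ^ (1/ε)
    · rw [if_pos hsmall, hbase]
      have h2e : (2:ℝ) ^ ε ≤ (p:ℝ) ^ ε :=
        Real.rpow_le_rpow (by norm_num) hp2 hε.le
      have hexp : 1 + (k:ℝ) * (ε * Real.log 2) ≤ ((2:ℝ) ^ ε) ^ k := by
        rw [← Real.rpow_natCast ((2:ℝ) ^ ε) k, ← Real.rpow_mul (by norm_num),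
          Real.rpow_def_of_pos (by norm_num)]
        calc 1 + (k:ℝ) * (ε * Real.log 2) = (ε * (k:ℝ)) * Real.log 2 + 1 := by ring
          _ ≤ Real.exp ((ε * (k:ℝ)) * Real.log 2) := Real.add_one_le_exp _
          _ = Real.exp (Real.log 2 * (ε * (k:ℝ))) := by ring_nf
      have h1 : ((k:ℝ) + 1) ≤ M * (1 + (k:ℝ) * (ε * Real.log 2)) := by
        have he : M * (1 + (k:ℝ) * (ε * Real.log 2)) = M + (k:ℝ) * (M * (ε * Real.log 2)) := by
          ring
        rw [he]
        have h2 : 1 ≤ M * (ε * Real.log 2) := by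
          rw [hM, add_mul, one_mul, div_mul_cancel₀ _ hεl.ne']
          linarith
        have h4 : (k:ℝ) * 1 ≤ (k:ℝ) * (M * (ε * Real.log 2)) :=
          mul_le_mul_of_nonneg_left h2 (by positivity)
        rw [mul_one] at h4
        linarith
      have h3 : (1 + (k:ℝ) * (ε * Real.log 2)) ≤ ((p:ℝ)^ε)^k :=
        le_trans hexp (pow_le_pow_left₀ (by positivity) h2e k)
      push_cast
      calc (k:ℝ) + 1 ≤ M * (1 + (k:ℝ) * (ε * Real.log 2)) := h1
        _ ≤ M * ((p:ℝ)^ε)^k := mul_le_mul_of_nonneg_left h3 (by linarith)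
    · rw [if_neg hsmall, hbase, one_mul]
      have h2p : (2:ℝ) ≤ (p:ℝ) ^ ε := by
        have := Real.rpow_le_rpow (by positivity) (le_of_not_gt hsmall) hε.le
        rwa [← Real.rpow_mul (by norm_num), one_div, inv_mul_cancel₀ hε.ne',
          Real.rpow_one] at this
      calc ((k+1 : ℕ):ℝ) ≤ ((2^k : ℕ):ℝ) := by exact_mod_cast Nat.succ_le_of_lt (Nat.lt_two_pow_self (n := k))
        _ = (2:ℝ)^k := by push_cast; ring
        _ ≤ ((p:ℝ)^ε)^k := pow_le_pow_left₀ (by norm_num) h2p k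
  have hprod : (g:ℝ) = ∏ p ∈ g.primeFactors, ((p:ℝ) ^ (g.factorization p : ℕ)) := by
    conv_lhs => rw [← Nat.factorization_prod_pow_eq_self hg0]
    rw [Nat.prod_factorization_eq_prod_primeFactors]
    push_cast
    rfl
  calc ((g.divisors.card : ℝ))
      = ∏ p ∈ g.primeFactors, ((g.factorization p + 1 : ℕ) : ℝ) := by
        rw [Nat.card_divisors hg0]; push_cast; rfl
    _ ≤ ∏ p ∈ g.primeFactors,
        ((if (p:ℝ) < (2:ℝ) ^ (1/ε) then M else 1) * ((p:ℝ) ^ (g.factorization p : ℕ)) ^ ε) :=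
        Finset.prod_le_prod (fun p _ => by positivity) key
    _ = (∏ p ∈ g.primeFactors, if (p:ℝ) < (2:ℝ) ^ (1/ε) then M else 1) *
        ∏ p ∈ g.primeFactors, ((p:ℝ) ^ (g.factorization p : ℕ)) ^ ε := Finset.prod_mul_distrib
    _ ≤ M ^ P * (g:ℝ) ^ ε := by
        have h1 : (∏ p ∈ g.primeFactors, if (p:ℝ) < (2:ℝ) ^ (1/ε) then M else 1) ≤ M ^ P := by
          rw [← Finset.prod_filter (fun p : ℕ => (p:ℝ) < (2:ℝ) ^ (1/ε)) (fun _ => M),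
            Finset.prod_const]
          apply pow_le_pow_right₀ (by linarith)
          calc (Finset.filter (fun a : ℕ => (a:ℝ) < (2:ℝ) ^ (1/ε)) g.primeFactors).card
              ≤ (Finset.range P).card := by
                apply Finset.card_le_card
                intro p hp
                simp only [Finset.mem_filter] at hp
                simp only [Finset.mem_range, hP]
                have : (p:ℝ) ≤ (⌈(2:ℝ) ^ (1/ε)⌉₊ : ℝ) := le_trans hp.2.le (Nat.le_ceil _)
                exact Nat.lt_succ_of_le (by exact_mod_cast this)
            _ = P := Finset.card_range P
        have h2 : ∏ p ∈ g.primeFactors, ((p:ℝ) ^ (g.factorization p : ℕ)) ^ ε = (g:ℝ) ^ ε := by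
          rw [Real.finset_prod_rpow _ _ (fun p _ => by positivity), ← hprod]
        rw [h2]
        apply mul_le_mul_of_nonneg_right h1 (by positivity)


/-- Given 0 < α < β and ε > 0, there is a constant C = C(α,β,ε) > 0 such that:
for all positive integers n, g, all real Q ≥ 1 and all nonnegative (A_q) with
`∑_{Q < q ≤ 2Q, d ∣ q} A_q ≤ B₁ + B₂/d` for every positive integer d, one has
`∑_{Q < q ≤ 2Q} gcd(n, lcm(q,g))^α lcm(q,g)^{−β} A_q
  ≤ C gcd(n,g)^α g^{−β+ε} (B₁ + Q^{−β'} B₂)` with β' = min(β−α, 1). -/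
theorem gcd_lcm_average_bound :
    ∀ α β ε : ℝ, 0 < α → α < β → 0 < ε →
      ∃ C : ℝ, 0 < C ∧ ∀ n g : ℕ, 0 < n → 0 < g → ∀ Q : ℝ, 1 ≤ Q →
        ∀ A : ℕ → ℝ, (∀ q, 0 ≤ A q) → ∀ B₁ B₂ : ℝ, 0 ≤ B₁ → 0 ≤ B₂ →
        (∀ d : ℕ, 0 < d →
          ∑ q ∈ (Finset.Icc 1 ⌊2 * Q⌋₊).filter
              (fun q : ℕ => Q < (q : ℝ) ∧ (q : ℝ) ≤ 2 * Q ∧ d ∣ q), A q ≤ B₁ + B₂ / (d : ℝ)) →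
        ∑ q ∈ (Finset.Icc 1 ⌊2 * Q⌋₊).filter (fun q : ℕ => Q < (q : ℝ) ∧ (q : ℝ) ≤ 2 * Q),
            ((Nat.gcd n (Nat.lcm q g) : ℝ)) ^ α * ((Nat.lcm q g : ℝ)) ^ (-β) * A q
          ≤ C * ((Nat.gcd n g : ℝ)) ^ α * (g : ℝ) ^ (-β + ε) *
              (B₁ + Q ^ (-(min (β - α) 1)) * B₂) := by
  intro α β ε hα hαβ hε
  obtain ⟨C₀, hC₀, hτ⟩ := tau_le ε hε
  refine ⟨2 * C₀, by positivity, ?_⟩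
  intro n g hn hg Q hQ A hA B₁ B₂ hB₁ hB₂ hyp
  set β' : ℝ := min (β - α) 1 with hβ'
  have hβ'pos : 0 < β' := lt_min (by linarith) one_pos
  have hβ'le1 : β' ≤ 1 := min_le_right _ _
  have hβ'le : β' ≤ β - α := min_le_left _ _
  have hQ0 : (0:ℝ) < Q := lt_of_lt_of_le one_pos hQ
  have hgR : (0:ℝ) < (g:ℝ) := by exact_mod_cast hg
  have hgcd : 0 < Nat.gcd n g := Nat.gcd_pos_of_pos_left g hn
  have hgcdR : (0:ℝ) < (Nat.gcd n g : ℝ) := by exact_mod_cast hgcd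
  set s := (Finset.Icc 1 ⌊2 * Q⌋₊).filter
    (fun q : ℕ => Q < (q : ℝ) ∧ (q : ℝ) ≤ 2 * Q) with hs
  set T := g.divisors.filter (fun e => e ≤ ⌊2 * Q⌋₊) with hT
  set f : ℕ → ℝ :=
    fun q => ((Nat.gcd n (Nat.lcm q g) : ℝ)) ^ α * ((Nat.lcm q g : ℝ)) ^ (-β) * A q with hf
  have hQ2 : ((⌊2 * Q⌋₊ : ℕ) : ℝ) ≤ 2 * Q := Nat.floor_le (by positivity)
  -- membership facts
  have hmem : ∀ q ∈ s, 1 ≤ q ∧ Q < (q:ℝ) ∧ (q:ℝ) ≤ 2 * Q ∧ q ≤ ⌊2 * Q⌋₊ := by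
    intro q hq
    rw [hs, Finset.mem_filter, Finset.mem_Icc] at hq
    exact ⟨hq.1.1, hq.2.1, hq.2.2, hq.1.2⟩
  have hmaps : ∀ q ∈ s, Nat.gcd q g ∈ T := by
    intro q hq
    obtain ⟨h1, _, _, h4⟩ := hmem q hq
    rw [hT, Finset.mem_filter, Nat.mem_divisors]
    refine ⟨⟨Nat.gcd_dvd_right q g, hg.ne'⟩, ?_⟩
    exact le_trans (Nat.le_of_dvd h1 (Nat.gcd_dvd_left q g)) h4
  have hsplit : ∑ q ∈ s, f q
      = ∑ e ∈ T, ∑ q ∈ s.filter (fun q => Nat.gcd q g = e), f q :=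
    (Finset.sum_fiberwise_of_maps_to hmaps f).symm
  have hinner : ∀ e ∈ T, (∑ q ∈ s.filter (fun q => Nat.gcd q g = e), f q)
      ≤ ((Nat.gcd n g : ℝ)) ^ α * (g:ℝ) ^ (-β) * (2 * B₁ + Q ^ (-β') * B₂) := by
    intro e he
    rw [hT, Finset.mem_filter, Nat.mem_divisors] at he
    obtain ⟨⟨hedvd, -⟩, hefloor⟩ := he
    have hepos : 0 < e := Nat.pos_of_dvd_of_pos hedvd hg
    have heR : (0:ℝ) < (e:ℝ) := by exact_mod_cast hepos
    have heR1 : (1:ℝ) ≤ (e:ℝ) := by exact_mod_cast hepos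
    have he2Q : (e:ℝ) ≤ 2 * Q := le_trans (by exact_mod_cast hefloor) hQ2
    set K : ℝ := ((Nat.gcd n g : ℝ)) ^ α * (g:ℝ) ^ (-β) * ((e:ℝ) ^ β' * Q ^ (-β')) with hK
    have hpoint : ∀ q ∈ s.filter (fun q => Nat.gcd q g = e), f q ≤ K * A q := by
      intro q hq
      rw [Finset.mem_filter] at hq
      obtain ⟨hqs, hqe⟩ := hq
      obtain ⟨hq1, hqQ, hq2Q, -⟩ := hmem q hqs
      have hqpos : 0 < q := hq1
      have hedq : e ∣ q := hqe ▸ Nat.gcd_dvd_left q g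
      set m : ℕ := q / e with hm
      have hme : m * e = q := Nat.div_mul_cancel hedq
      have hmpos : 0 < m := by
        rcases Nat.eq_zero_or_pos m with h | h
        · exfalso; rw [h, zero_mul] at hme; omega
        · exact h
      have hmR : (0:ℝ) < (m:ℝ) := by exact_mod_cast hmpos
      have hmR1 : (1:ℝ) ≤ (m:ℝ) := by exact_mod_cast hmpos
      have hlcm : Nat.lcm q g = m * g := by
        have h := Nat.gcd_mul_lcm q g
        rw [hqe] at h
        have h2 : e * Nat.lcm q g = e * (m * g) := by
          rw [h, ← hme]; ring
        exact Nat.eq_of_mul_eq_mul_left hepos h2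
      have hdvd2 : Nat.gcd n (Nat.lcm q g) ∣ m * Nat.gcd n g := by
        rw [hlcm]
        have h1 : Nat.gcd n (m * g) ∣ Nat.gcd (m * n) (m * g) :=
          Nat.dvd_gcd (dvd_trans (Nat.gcd_dvd_left _ _) (dvd_mul_left n m))
            (Nat.gcd_dvd_right _ _)
        rwa [Nat.gcd_mul_left] at h1
      have hle : (Nat.gcd n (Nat.lcm q g) : ℝ) ≤ (m:ℝ) * (Nat.gcd n g : ℝ) := by
        have := Nat.le_of_dvd (by positivity) hdvd2
        exact_mod_cast this
      -- coefficient bound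
      have hcoef : ((Nat.gcd n (Nat.lcm q g) : ℝ)) ^ α * ((Nat.lcm q g : ℝ)) ^ (-β) ≤ K := by
        have hL : ((Nat.lcm q g : ℝ)) ^ (-β) = (m:ℝ) ^ (-β) * (g:ℝ) ^ (-β) := by
          rw [hlcm]
          push_cast
          exact Real.mul_rpow hmR.le hgR.le
        have hG : ((Nat.gcd n (Nat.lcm q g) : ℝ)) ^ α ≤ (m:ℝ) ^ α * (Nat.gcd n g : ℝ) ^ α := by
          rw [← Real.mul_rpow hmR.le hgcdR.le]
          exact Real.rpow_le_rpow (by positivity) hle hα.le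
        have hstep : ((Nat.gcd n (Nat.lcm q g) : ℝ)) ^ α * ((Nat.lcm q g : ℝ)) ^ (-β)
            ≤ ((Nat.gcd n g : ℝ)) ^ α * (g:ℝ) ^ (-β) * ((m:ℝ) ^ α * (m:ℝ) ^ (-β)) := by
          rw [hL]
          have hLnn : (0:ℝ) ≤ (m:ℝ) ^ (-β) * (g:ℝ) ^ (-β) := by positivity
          calc ((Nat.gcd n (Nat.lcm q g) : ℝ)) ^ α * ((m:ℝ) ^ (-β) * (g:ℝ) ^ (-β))
              ≤ ((m:ℝ) ^ α * (Nat.gcd n g : ℝ) ^ α) * ((m:ℝ) ^ (-β) * (g:ℝ) ^ (-β)) :=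
                mul_le_mul_of_nonneg_right hG hLnn
            _ = ((Nat.gcd n g : ℝ)) ^ α * (g:ℝ) ^ (-β) * ((m:ℝ) ^ α * (m:ℝ) ^ (-β)) := by ring
        have hmm : (m:ℝ) ^ α * (m:ℝ) ^ (-β) ≤ (e:ℝ) ^ β' * Q ^ (-β') := by
          have h1 : (m:ℝ) ^ α * (m:ℝ) ^ (-β) = (m:ℝ) ^ (α + -β) := (Real.rpow_add hmR α (-β)).symm
          have h2 : (m:ℝ) ^ (α + -β) ≤ (m:ℝ) ^ (-β') :=
            Real.rpow_le_rpow_of_exponent_le hmR1 (by linarith)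
          have hmQ : Q / (e:ℝ) ≤ (m:ℝ) := by
            rw [div_le_iff₀ heR]
            have : (m:ℝ) * (e:ℝ) = (q:ℝ) := by exact_mod_cast hme
            rw [this]; exact hqQ.le
          have h3 : (m:ℝ) ^ (-β') ≤ (e:ℝ) ^ β' * Q ^ (-β') := by
            have h4 : (Q / (e:ℝ)) ^ β' ≤ (m:ℝ) ^ β' :=
              Real.rpow_le_rpow (by positivity) hmQ hβ'pos.le
            have h5 : ((m:ℝ) ^ β')⁻¹ ≤ ((Q / (e:ℝ)) ^ β')⁻¹ :=
              inv_anti₀ (by positivity) h4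
            rw [Real.rpow_neg hmR.le]
            calc ((m:ℝ) ^ β')⁻¹ ≤ ((Q / (e:ℝ)) ^ β')⁻¹ := h5
              _ = (e:ℝ) ^ β' * Q ^ (-β') := by
                  rw [Real.div_rpow hQ0.le heR.le, inv_div, Real.rpow_neg hQ0.le]
                  ring
          calc (m:ℝ) ^ α * (m:ℝ) ^ (-β) = (m:ℝ) ^ (α + -β) := h1
            _ ≤ (m:ℝ) ^ (-β') := h2
            _ ≤ (e:ℝ) ^ β' * Q ^ (-β') := h3
        calc ((Nat.gcd n (Nat.lcm q g) : ℝ)) ^ α * ((Nat.lcm q g : ℝ)) ^ (-β)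
            ≤ ((Nat.gcd n g : ℝ)) ^ α * (g:ℝ) ^ (-β) * ((m:ℝ) ^ α * (m:ℝ) ^ (-β)) := hstep
          _ ≤ ((Nat.gcd n g : ℝ)) ^ α * (g:ℝ) ^ (-β) * ((e:ℝ) ^ β' * Q ^ (-β')) := by
              apply mul_le_mul_of_nonneg_left hmm (by positivity)
      rw [hf]
      exact mul_le_mul_of_nonneg_right hcoef (hA q)
    have hsubset : s.filter (fun q => Nat.gcd q g = e) ⊆
        (Finset.Icc 1 ⌊2 * Q⌋₊).filter
          (fun q : ℕ => Q < (q : ℝ) ∧ (q : ℝ) ≤ 2 * Q ∧ e ∣ q) := by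
      intro q hq
      rw [Finset.mem_filter] at hq
      obtain ⟨hqs, hqe⟩ := hq
      rw [hs, Finset.mem_filter] at hqs
      rw [Finset.mem_filter]
      exact ⟨hqs.1, hqs.2.1, hqs.2.2, hqe ▸ Nat.gcd_dvd_left q g⟩
    have hAsum : ∑ q ∈ s.filter (fun q => Nat.gcd q g = e), A q ≤ B₁ + B₂ / (e:ℝ) :=
      le_trans (Finset.sum_le_sum_of_subset_of_nonneg hsubset (fun q _ _ => hA q))
        (hyp e hepos)
    have hKnn : 0 ≤ K := by rw [hK]; positivity
    calc ∑ q ∈ s.filter (fun q => Nat.gcd q g = e), f q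
        ≤ ∑ q ∈ s.filter (fun q => Nat.gcd q g = e), K * A q := Finset.sum_le_sum hpoint
      _ = K * ∑ q ∈ s.filter (fun q => Nat.gcd q g = e), A q := by rw [Finset.mul_sum]
      _ ≤ K * (B₁ + B₂ / (e:ℝ)) := mul_le_mul_of_nonneg_left hAsum hKnn
      _ ≤ ((Nat.gcd n g : ℝ)) ^ α * (g:ℝ) ^ (-β) * (2 * B₁ + Q ^ (-β') * B₂) := by
          rw [hK]
          have hscal : (e:ℝ) ^ β' * Q ^ (-β') * (B₁ + B₂ / (e:ℝ)) ≤ 2 * B₁ + Q ^ (-β') * B₂ := by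
            have key1 : (e:ℝ) ^ β' * Q ^ (-β') ≤ 2 := by
              have h1 : (e:ℝ) ^ β' ≤ (2 * Q) ^ β' :=
                Real.rpow_le_rpow heR.le he2Q hβ'pos.le
              have h2 : ((2:ℝ) * Q) ^ β' = 2 ^ β' * Q ^ β' :=
                Real.mul_rpow (by norm_num) hQ0.le
              have h3 : (2:ℝ) ^ β' ≤ 2 := by
                calc (2:ℝ) ^ β' ≤ (2:ℝ) ^ (1:ℝ) :=
                      Real.rpow_le_rpow_of_exponent_le (by norm_num) hβ'le1
                  _ = 2 := Real.rpow_one 2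
              have h4 : Q ^ β' * Q ^ (-β') = 1 := by
                rw [← Real.rpow_add hQ0]; simp
              calc (e:ℝ) ^ β' * Q ^ (-β') ≤ (2 ^ β' * Q ^ β') * Q ^ (-β') := by
                    apply mul_le_mul_of_nonneg_right _ (by positivity)
                    rw [← h2]; exact h1
                _ = 2 ^ β' * (Q ^ β' * Q ^ (-β')) := by ring
                _ = 2 ^ β' := by rw [h4, mul_one]
                _ ≤ 2 := h3
            have key2 : (e:ℝ) ^ β' * (B₂ / (e:ℝ)) ≤ B₂ := by
              have h1 : (e:ℝ) ^ β' * (e:ℝ)⁻¹ ≤ 1 := by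
                have he : (e:ℝ) ^ β' * (e:ℝ)⁻¹ = (e:ℝ) ^ (β' - 1) := by
                  rw [Real.rpow_sub heR, Real.rpow_one]; ring
                rw [he]
                calc (e:ℝ) ^ (β' - 1) ≤ (e:ℝ) ^ (0:ℝ) :=
                      Real.rpow_le_rpow_of_exponent_le heR1 (by linarith)
                  _ = 1 := Real.rpow_zero _
              calc (e:ℝ) ^ β' * (B₂ / (e:ℝ)) = ((e:ℝ) ^ β' * (e:ℝ)⁻¹) * B₂ := by
                    rw [div_eq_mul_inv]; ring
                _ ≤ 1 * B₂ := mul_le_mul_of_nonneg_right h1 hB₂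
                _ = B₂ := one_mul B₂
            have hQβ'nn : (0:ℝ) ≤ Q ^ (-β') := by positivity
            have expand : (e:ℝ) ^ β' * Q ^ (-β') * (B₁ + B₂ / (e:ℝ))
                = ((e:ℝ) ^ β' * Q ^ (-β')) * B₁ + Q ^ (-β') * ((e:ℝ) ^ β' * (B₂ / (e:ℝ))) := by
              ring
            rw [expand]
            have t1 : ((e:ℝ) ^ β' * Q ^ (-β')) * B₁ ≤ 2 * B₁ :=
              mul_le_mul_of_nonneg_right key1 hB₁
            have t2 : Q ^ (-β') * ((e:ℝ) ^ β' * (B₂ / (e:ℝ))) ≤ Q ^ (-β') * B₂ :=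
              mul_le_mul_of_nonneg_left key2 hQβ'nn
            linarith
          calc ((Nat.gcd n g : ℝ)) ^ α * (g:ℝ) ^ (-β) * ((e:ℝ) ^ β' * Q ^ (-β')) * (B₁ + B₂ / (e:ℝ))
              = (((Nat.gcd n g : ℝ)) ^ α * (g:ℝ) ^ (-β)) *
                ((e:ℝ) ^ β' * Q ^ (-β') * (B₁ + B₂ / (e:ℝ))) := by ring
            _ ≤ (((Nat.gcd n g : ℝ)) ^ α * (g:ℝ) ^ (-β)) * (2 * B₁ + Q ^ (-β') * B₂) :=
                mul_le_mul_of_nonneg_left hscal (by positivity)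
            _ = ((Nat.gcd n g : ℝ)) ^ α * (g:ℝ) ^ (-β) * (2 * B₁ + Q ^ (-β') * B₂) := by ring
  -- final assembly
  have hTcard : ((T.card : ℕ) : ℝ) ≤ C₀ * (g:ℝ) ^ ε := by
    refine le_trans ?_ (hτ g hg)
    exact_mod_cast Finset.card_le_card (Finset.filter_subset _ _)
  have hconstnn : (0:ℝ) ≤ ((Nat.gcd n g : ℝ)) ^ α * (g:ℝ) ^ (-β) * (2 * B₁ + Q ^ (-β') * B₂) := by
    have : (0:ℝ) ≤ 2 * B₁ + Q ^ (-β') * B₂ := by positivity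
    positivity
  calc ∑ q ∈ s, f q
      = ∑ e ∈ T, ∑ q ∈ s.filter (fun q => Nat.gcd q g = e), f q := hsplit
    _ ≤ ∑ e ∈ T, ((Nat.gcd n g : ℝ)) ^ α * (g:ℝ) ^ (-β) * (2 * B₁ + Q ^ (-β') * B₂) :=
        Finset.sum_le_sum hinner
    _ = (T.card : ℝ) * (((Nat.gcd n g : ℝ)) ^ α * (g:ℝ) ^ (-β) * (2 * B₁ + Q ^ (-β') * B₂)) := by
        rw [Finset.sum_const, nsmul_eq_mul]
    _ ≤ (C₀ * (g:ℝ) ^ ε) * (((Nat.gcd n g : ℝ)) ^ α * (g:ℝ) ^ (-β) * (2 * B₁ + Q ^ (-β') * B₂)) :=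
        mul_le_mul_of_nonneg_right hTcard hconstnn
    _ ≤ (C₀ * (g:ℝ) ^ ε) *
        (((Nat.gcd n g : ℝ)) ^ α * (g:ℝ) ^ (-β) * (2 * (B₁ + Q ^ (-β') * B₂))) := by
        apply mul_le_mul_of_nonneg_left _ (by positivity : (0:ℝ) ≤ C₀ * (g:ℝ) ^ ε)
        apply mul_le_mul_of_nonneg_left _
          (by positivity : (0:ℝ) ≤ ((Nat.gcd n g : ℝ)) ^ α * (g:ℝ) ^ (-β))
        have : (0:ℝ) ≤ Q ^ (-β') * B₂ := by positivity
        linarith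
    _ = 2 * C₀ * ((Nat.gcd n g : ℝ)) ^ α * (g : ℝ) ^ (-β + ε) * (B₁ + Q ^ (-β') * B₂) := by
        rw [Real.rpow_add hgR (-β) ε]
        ring
end

section
/- The double integral ∫_{1/4}^{3/10} ∫_{1/4}^{α} 1/(α β (1 − α − β)) dβ dα is strictly less than 0.037. -/
open MeasureTheory intervalIntegral

noncomputable def gg (α : ℝ) : ℝ := ∫ β in (1 / 4 : ℝ)..α, 1 / (α * β * (1 - α - β))

lemma f_intable {α : ℝ} (h1 : 1 / 4 ≤ α) (h2 : α ≤ 3 / 10) :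
    IntervalIntegrable (fun β : ℝ => 1 / (α * β * (1 - α - β))) volume (1 / 4) α := by
  apply ContinuousOn.intervalIntegrable
  apply ContinuousOn.div continuousOn_const (by fun_prop)
  intro β hβ
  rw [Set.uIcc_of_le h1] at hβ
  obtain ⟨hb1, hb2⟩ := hβ
  have h1' : (0:ℝ) < α := by linarith
  have h2' : (0:ℝ) < β := by linarith
  have h3' : (0:ℝ) < 1 - α - β := by linarith
  positivity

lemma strip (x y p q r s : ℝ) (hx : 1 / 4 ≤ x) (hxy : x ≤ y) (hy : y ≤ 3 / 10)
    (hG : IntervalIntegrable gg volume x y)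
    (hpt : ∀ α β : ℝ, x ≤ α → α ≤ y → 1 / 4 ≤ β → β ≤ α →
        1 / (α * β * (1 - α - β)) ≤ (p + q * α) + (r + s * α) * β) :
    (∫ α in x..y, gg α) ≤
      (-p/4 - r/32) * (y - x) + (p - q/4 - s/32) * (y^2 - x^2)/2
        + (q + r/2) * (y^3 - x^3)/3 + (s/2) * (y^4 - x^4)/4 := by
  have key : ∀ α ∈ Set.Icc x y, gg α ≤ (p + q*α) * (α - 1/4) + (r + s*α) * (α^2 - (1/4:ℝ)^2)/2 := by
    rintro α ⟨ha1, ha2⟩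
    have h14 : (1/4:ℝ) ≤ α := le_trans hx ha1
    have h310 : α ≤ 3/10 := le_trans ha2 hy
    have step1 : gg α ≤ ∫ β in (1/4:ℝ)..α, ((p + q*α) + (r + s*α) * β) := by
      apply intervalIntegral.integral_mono_on h14 (f_intable h14 h310)
        ((continuous_const.add (continuous_const.mul continuous_id)).intervalIntegrable _ _)
      rintro β ⟨hb1, hb2⟩
      exact hpt α β ha1 ha2 hb1 hb2
    refine le_trans step1 (le_of_eq ?_)
    rw [intervalIntegral.integral_add (intervalIntegrable_const)
      (by apply Continuous.intervalIntegrable; fun_prop),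
      intervalIntegral.integral_const, intervalIntegral.integral_const_mul, integral_id]
    simp only [smul_eq_mul]
    ring
  have hcont : Continuous (fun α : ℝ => (p + q*α) * (α - 1/4) + (r + s*α) * (α^2 - (1/4:ℝ)^2)/2) := by
    fun_prop
  have step2 : (∫ α in x..y, gg α)
      ≤ ∫ α in x..y, ((p + q*α) * (α - 1/4) + (r + s*α) * (α^2 - (1/4:ℝ)^2)/2) :=
    intervalIntegral.integral_mono_on hxy hG (hcont.intervalIntegrable _ _) key
  refine le_trans step2 (le_of_eq ?_)
  have e : (fun α : ℝ => (p + q*α) * (α - 1/4) + (r + s*α) * (α^2 - (1/4:ℝ)^2)/2)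
      = fun α : ℝ => (-p/4 - r/32) + ((p - q/4 - s/32) * α + ((q + r/2) * α^2 + (s/2) * α^3)) := by
    funext α; ring
  rw [e, intervalIntegral.integral_add (intervalIntegrable_const) (by apply Continuous.intervalIntegrable; fun_prop),
    intervalIntegral.integral_add (by apply Continuous.intervalIntegrable; fun_prop) (by apply Continuous.intervalIntegrable; fun_prop),
    intervalIntegral.integral_add (by apply Continuous.intervalIntegrable; fun_prop) (by apply Continuous.intervalIntegrable; fun_prop),
    intervalIntegral.integral_const, intervalIntegral.integral_const_mul,
    intervalIntegral.integral_const_mul, intervalIntegral.integral_const_mul,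
    integral_id, integral_pow, integral_pow]
  simp only [smul_eq_mul]
  push_cast
  ring

lemma sub_uIcc {a b : ℝ} (h1 : 1 / 4 ≤ a) (h2 : a ≤ b) (h3 : b ≤ 3 / 10) :
    Set.uIcc a b ⊆ Set.uIcc (1 / 4 : ℝ) (3 / 10) := by
  rw [Set.uIcc_of_le h2, Set.uIcc_of_le (by norm_num)]
  exact Set.Icc_subset_Icc h1 h3

lemma piece0 (hG : IntervalIntegrable gg volume ((1 : ℝ)/4) ((31 : ℝ)/120)) :
    (∫ α in ((1 : ℝ)/4)..((31 : ℝ)/120), gg α) ≤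
      (-((127757792 : ℝ)/1644271)/4 - ((-200451840 : ℝ)/1644271)/32) * (((31 : ℝ)/120) - ((1 : ℝ)/4)) + (((127757792 : ℝ)/1644271) - ((-200451840 : ℝ)/1644271)/4 - ((401356800 : ℝ)/1644271)/32) * (((31 : ℝ)/120)^2 - ((1 : ℝ)/4)^2)/2
        + (((-200451840 : ℝ)/1644271) + ((-200451840 : ℝ)/1644271)/2) * (((31 : ℝ)/120)^3 - ((1 : ℝ)/4)^3)/3 + (((401356800 : ℝ)/1644271)/2) * (((31 : ℝ)/120)^4 - ((1 : ℝ)/4)^4)/4 := by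
  apply strip _ _ _ _ _ _ (by norm_num) (by norm_num) (by norm_num) hG
  intro α β h1 h2 h3 h4
  have ha : (0:ℝ) < α := by linarith
  have hb : (0:ℝ) < β := by linarith
  have hc : (0:ℝ) < 1 - α - β := by linarith
  have hd : (0:ℝ) < α * β * (1 - α - β) := by positivity
  rw [div_le_iff₀ hd]
  nlinarith [mul_nonneg (mul_nonneg (sub_nonneg.2 h1) (sub_nonneg.2 h3)) (sub_nonneg.2 h2),
    mul_nonneg (mul_nonneg (sub_nonneg.2 h1) (sub_nonneg.2 h3)) (sub_nonneg.2 h4),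
    mul_nonneg (mul_nonneg (sub_nonneg.2 h2) (sub_nonneg.2 h3)) (sub_nonneg.2 h4),
    mul_nonneg (sub_nonneg.2 h1) (sub_nonneg.2 h2),
    mul_nonneg (sub_nonneg.2 h3) (sub_nonneg.2 h4),
    sq_nonneg (α - β), sq_nonneg (α + β - 1/2), mul_pos hd hd]

lemma piece1 (hG : IntervalIntegrable gg volume ((31 : ℝ)/120) ((4 : ℝ)/15)) :
    (∫ α in ((31 : ℝ)/120)..((4 : ℝ)/15), gg α) ≤
      (-((8404825725 : ℝ)/112871248)/4 - ((-3247192125 : ℝ)/28217812)/32) * (((4 : ℝ)/15) - ((31 : ℝ)/120)) + (((8404825725 : ℝ)/112871248) - ((-1583074125 : ℝ)/14108906)/4 - ((1614836250 : ℝ)/7054453)/32) * (((4 : ℝ)/15)^2 - ((31 : ℝ)/120)^2)/2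
        + (((-1583074125 : ℝ)/14108906) + ((-3247192125 : ℝ)/28217812)/2) * (((4 : ℝ)/15)^3 - ((31 : ℝ)/120)^3)/3 + (((1614836250 : ℝ)/7054453)/2) * (((4 : ℝ)/15)^4 - ((31 : ℝ)/120)^4)/4 := by
  apply strip _ _ _ _ _ _ (by norm_num) (by norm_num) (by norm_num) hG
  intro α β h1 h2 h3 h4
  have ha : (0:ℝ) < α := by linarith
  have hb : (0:ℝ) < β := by linarith
  have hc : (0:ℝ) < 1 - α - β := by linarith
  have hd : (0:ℝ) < α * β * (1 - α - β) := by positivity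
  rw [div_le_iff₀ hd]
  nlinarith [mul_nonneg (mul_nonneg (sub_nonneg.2 h1) (sub_nonneg.2 h3)) (sub_nonneg.2 h2),
    mul_nonneg (mul_nonneg (sub_nonneg.2 h1) (sub_nonneg.2 h3)) (sub_nonneg.2 h4),
    mul_nonneg (mul_nonneg (sub_nonneg.2 h2) (sub_nonneg.2 h3)) (sub_nonneg.2 h4),
    mul_nonneg (sub_nonneg.2 h1) (sub_nonneg.2 h2),
    mul_nonneg (sub_nonneg.2 h3) (sub_nonneg.2 h4),
    sq_nonneg (α - β), sq_nonneg (α + β - 1/2), mul_pos hd hd]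

lemma piece2 (hG : IntervalIntegrable gg volume ((4 : ℝ)/15) ((11 : ℝ)/40)) :
    (∫ α in ((4 : ℝ)/15)..((11 : ℝ)/40), gg α) ≤
      (-((42908900 : ℝ)/600039)/4 - ((-65468000 : ℝ)/600039)/32) * (((11 : ℝ)/40) - ((4 : ℝ)/15)) + (((42908900 : ℝ)/600039) - ((-20740000 : ℝ)/200013)/4 - ((43360000 : ℝ)/200013)/32) * (((11 : ℝ)/40)^2 - ((4 : ℝ)/15)^2)/2
        + (((-20740000 : ℝ)/200013) + ((-65468000 : ℝ)/600039)/2) * (((11 : ℝ)/40)^3 - ((4 : ℝ)/15)^3)/3 + (((43360000 : ℝ)/200013)/2) * (((11 : ℝ)/40)^4 - ((4 : ℝ)/15)^4)/4 := by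
  apply strip _ _ _ _ _ _ (by norm_num) (by norm_num) (by norm_num) hG
  intro α β h1 h2 h3 h4
  have ha : (0:ℝ) < α := by linarith
  have hb : (0:ℝ) < β := by linarith
  have hc : (0:ℝ) < 1 - α - β := by linarith
  have hd : (0:ℝ) < α * β * (1 - α - β) := by positivity
  rw [div_le_iff₀ hd]
  nlinarith [mul_nonneg (mul_nonneg (sub_nonneg.2 h1) (sub_nonneg.2 h3)) (sub_nonneg.2 h2),
    mul_nonneg (mul_nonneg (sub_nonneg.2 h1) (sub_nonneg.2 h3)) (sub_nonneg.2 h4),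
    mul_nonneg (mul_nonneg (sub_nonneg.2 h2) (sub_nonneg.2 h3)) (sub_nonneg.2 h4),
    mul_nonneg (sub_nonneg.2 h1) (sub_nonneg.2 h2),
    mul_nonneg (sub_nonneg.2 h3) (sub_nonneg.2 h4),
    sq_nonneg (α - β), sq_nonneg (α + β - 1/2), mul_pos hd hd]

lemma piece3 (hG : IntervalIntegrable gg volume ((11 : ℝ)/40) ((17 : ℝ)/60)) :
    (∫ α in ((11 : ℝ)/40)..((17 : ℝ)/60), gg α) ≤
      (-((20047394600 : ℝ)/291314023)/4 - ((-30282828000 : ℝ)/291314023)/32) * (((17 : ℝ)/60) - ((11 : ℝ)/40)) + (((20047394600 : ℝ)/291314023) - ((-28039992000 : ℝ)/291314023)/4 - ((60435360000 : ℝ)/291314023)/32) * (((17 : ℝ)/60)^2 - ((11 : ℝ)/40)^2)/2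
        + (((-28039992000 : ℝ)/291314023) + ((-30282828000 : ℝ)/291314023)/2) * (((17 : ℝ)/60)^3 - ((11 : ℝ)/40)^3)/3 + (((60435360000 : ℝ)/291314023)/2) * (((17 : ℝ)/60)^4 - ((11 : ℝ)/40)^4)/4 := by
  apply strip _ _ _ _ _ _ (by norm_num) (by norm_num) (by norm_num) hG
  intro α β h1 h2 h3 h4
  have ha : (0:ℝ) < α := by linarith
  have hb : (0:ℝ) < β := by linarith
  have hc : (0:ℝ) < 1 - α - β := by linarith
  have hd : (0:ℝ) < α * β * (1 - α - β) := by positivity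
  rw [div_le_iff₀ hd]
  nlinarith [mul_nonneg (mul_nonneg (sub_nonneg.2 h1) (sub_nonneg.2 h3)) (sub_nonneg.2 h2),
    mul_nonneg (mul_nonneg (sub_nonneg.2 h1) (sub_nonneg.2 h3)) (sub_nonneg.2 h4),
    mul_nonneg (mul_nonneg (sub_nonneg.2 h2) (sub_nonneg.2 h3)) (sub_nonneg.2 h4),
    mul_nonneg (sub_nonneg.2 h1) (sub_nonneg.2 h2),
    mul_nonneg (sub_nonneg.2 h3) (sub_nonneg.2 h4),
    sq_nonneg (α - β), sq_nonneg (α + β - 1/2), mul_pos hd hd]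

lemma piece4 (hG : IntervalIntegrable gg volume ((17 : ℝ)/60) ((7 : ℝ)/24)) :
    (∫ α in ((17 : ℝ)/60)..((7 : ℝ)/24), gg α) ≤
      (-((51692112 : ℝ)/778855)/4 - ((-77563008 : ℝ)/778855)/32) * (((7 : ℝ)/24) - ((17 : ℝ)/60)) + (((51692112 : ℝ)/778855) - ((-13986432 : ℝ)/155771)/4 - ((31269888 : ℝ)/155771)/32) * (((7 : ℝ)/24)^2 - ((17 : ℝ)/60)^2)/2
        + (((-13986432 : ℝ)/155771) + ((-77563008 : ℝ)/778855)/2) * (((7 : ℝ)/24)^3 - ((17 : ℝ)/60)^3)/3 + (((31269888 : ℝ)/155771)/2) * (((7 : ℝ)/24)^4 - ((17 : ℝ)/60)^4)/4 := by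
  apply strip _ _ _ _ _ _ (by norm_num) (by norm_num) (by norm_num) hG
  intro α β h1 h2 h3 h4
  have ha : (0:ℝ) < α := by linarith
  have hb : (0:ℝ) < β := by linarith
  have hc : (0:ℝ) < 1 - α - β := by linarith
  have hd : (0:ℝ) < α * β * (1 - α - β) := by positivity
  rw [div_le_iff₀ hd]
  nlinarith [mul_nonneg (mul_nonneg (sub_nonneg.2 h1) (sub_nonneg.2 h3)) (sub_nonneg.2 h2),
    mul_nonneg (mul_nonneg (sub_nonneg.2 h1) (sub_nonneg.2 h3)) (sub_nonneg.2 h4),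
    mul_nonneg (mul_nonneg (sub_nonneg.2 h2) (sub_nonneg.2 h3)) (sub_nonneg.2 h4),
    mul_nonneg (sub_nonneg.2 h1) (sub_nonneg.2 h2),
    mul_nonneg (sub_nonneg.2 h3) (sub_nonneg.2 h4),
    sq_nonneg (α - β), sq_nonneg (α + β - 1/2), mul_pos hd hd]

lemma piece5 (hG : IntervalIntegrable gg volume ((7 : ℝ)/24) ((3 : ℝ)/10)) :
    (∫ α in ((7 : ℝ)/24)..((3 : ℝ)/10), gg α) ≤
      (-((2178574 : ℝ)/33957)/4 - ((-9779240 : ℝ)/101871)/32) * (((3 : ℝ)/10) - ((7 : ℝ)/24)) + (((2178574 : ℝ)/33957) - ((-953360 : ℝ)/11319)/4 - ((6673600 : ℝ)/33957)/32) * (((3 : ℝ)/10)^2 - ((7 : ℝ)/24)^2)/2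
        + (((-953360 : ℝ)/11319) + ((-9779240 : ℝ)/101871)/2) * (((3 : ℝ)/10)^3 - ((7 : ℝ)/24)^3)/3 + (((6673600 : ℝ)/33957)/2) * (((3 : ℝ)/10)^4 - ((7 : ℝ)/24)^4)/4 := by
  apply strip _ _ _ _ _ _ (by norm_num) (by norm_num) (by norm_num) hG
  intro α β h1 h2 h3 h4
  have ha : (0:ℝ) < α := by linarith
  have hb : (0:ℝ) < β := by linarith
  have hc : (0:ℝ) < 1 - α - β := by linarith
  have hd : (0:ℝ) < α * β * (1 - α - β) := by positivity
  rw [div_le_iff₀ hd]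
  nlinarith [mul_nonneg (mul_nonneg (sub_nonneg.2 h1) (sub_nonneg.2 h3)) (sub_nonneg.2 h2),
    mul_nonneg (mul_nonneg (sub_nonneg.2 h1) (sub_nonneg.2 h3)) (sub_nonneg.2 h4),
    mul_nonneg (mul_nonneg (sub_nonneg.2 h2) (sub_nonneg.2 h3)) (sub_nonneg.2 h4),
    mul_nonneg (sub_nonneg.2 h1) (sub_nonneg.2 h2),
    mul_nonneg (sub_nonneg.2 h3) (sub_nonneg.2 h4),
    sq_nonneg (α - β), sq_nonneg (α + β - 1/2), mul_pos hd hd]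

/-- `∫_{1/4}^{3/10} ∫_{1/4}^{α} dβ dα / (αβ(1−α−β)) < 0.037`. -/
theorem double_integral_lt :
    (∫ α in (1 / 4 : ℝ)..(3 / 10 : ℝ), ∫ β in (1 / 4 : ℝ)..α,
        1 / (α * β * (1 - α - β))) < 0.037 := by
  show (∫ α in (1 / 4 : ℝ)..(3 / 10 : ℝ), gg α) < 0.037
  by_cases hG : IntervalIntegrable gg volume (1 / 4 : ℝ) (3 / 10 : ℝ)
  · have h0 : IntervalIntegrable gg volume ((1 : ℝ)/4) ((31 : ℝ)/120) := hG.mono_set (sub_uIcc (by norm_num) (by norm_num) (by norm_num))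
    have h1 : IntervalIntegrable gg volume ((31 : ℝ)/120) ((4 : ℝ)/15) := hG.mono_set (sub_uIcc (by norm_num) (by norm_num) (by norm_num))
    have h2 : IntervalIntegrable gg volume ((4 : ℝ)/15) ((11 : ℝ)/40) := hG.mono_set (sub_uIcc (by norm_num) (by norm_num) (by norm_num))
    have h3 : IntervalIntegrable gg volume ((11 : ℝ)/40) ((17 : ℝ)/60) := hG.mono_set (sub_uIcc (by norm_num) (by norm_num) (by norm_num))
    have h4 : IntervalIntegrable gg volume ((17 : ℝ)/60) ((7 : ℝ)/24) := hG.mono_set (sub_uIcc (by norm_num) (by norm_num) (by norm_num))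
    have h5 : IntervalIntegrable gg volume ((7 : ℝ)/24) ((3 : ℝ)/10) := hG.mono_set (sub_uIcc (by norm_num) (by norm_num) (by norm_num))
    have t1 : IntervalIntegrable gg volume ((31 : ℝ)/120) ((3 : ℝ)/10) := hG.mono_set (sub_uIcc (by norm_num) (by norm_num) (by norm_num))
    have t2 : IntervalIntegrable gg volume ((4 : ℝ)/15) ((3 : ℝ)/10) := hG.mono_set (sub_uIcc (by norm_num) (by norm_num) (by norm_num))
    have t3 : IntervalIntegrable gg volume ((11 : ℝ)/40) ((3 : ℝ)/10) := hG.mono_set (sub_uIcc (by norm_num) (by norm_num) (by norm_num))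
    have t4 : IntervalIntegrable gg volume ((17 : ℝ)/60) ((3 : ℝ)/10) := hG.mono_set (sub_uIcc (by norm_num) (by norm_num) (by norm_num))
    have t5 : IntervalIntegrable gg volume ((7 : ℝ)/24) ((3 : ℝ)/10) := hG.mono_set (sub_uIcc (by norm_num) (by norm_num) (by norm_num))
    rw [← intervalIntegral.integral_add_adjacent_intervals h0 t1, ← intervalIntegral.integral_add_adjacent_intervals h1 t2, ← intervalIntegral.integral_add_adjacent_intervals h2 t3, ← intervalIntegral.integral_add_adjacent_intervals h3 t4, ← intervalIntegral.integral_add_adjacent_intervals h4 t5]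
    have B := add_le_add (piece0 h0) (add_le_add (piece1 h1) (add_le_add (piece2 h2) (add_le_add (piece3 h3) (add_le_add (piece4 h4) (piece5 h5)))))
    refine lt_of_le_of_lt B ?_
    norm_num
  · rw [intervalIntegral.integral_undef hG]
    norm_num
end
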